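/- Let x ⊂ y with |x| = r−1, |y| = r, x,y ⊆ [n]. If v₁, …, v_n are chosen independently uniformly at random from 𝔽₂^r \ {0} and v₀ is a fixed nonzero vector, then the probability that both ({v₀} ∪ {v_i : i ∈ x}) and ({v_i : i ∈ y}) are bases of 𝔽₂^r is greater than (1/2)·∏_{k=1}^∞ (1 − 2^{−k}). -/

import Mathlib

open Submodule Set

attribute [local instance] Fintype.ofFinite

variable {r : ℕ}

local notation "W" => (Fin r → ZMod 2)

lemma card_V : Fintype.card (Fin r → ZMod 2) = 2 ^ r := by
  rw [Module.card_eq_pow_finrank (K := ZMod 2), ZMod.card, Module.finrank_fintype_fun_eq_card,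
    Fintype.card_fin]

open Classical in
lemma card_compl_span {ι : Type} [Fintype ι] {f : ι → W}
    (hf : LinearIndependent (ZMod 2) f) :
    Nat.card {a : Fin r → ZMod 2 // a ∉ Submodule.span (ZMod 2) (Set.range f)} =
      2 ^ r - 2 ^ (Fintype.card ι) := by
  have h1 : Nat.card {a : Fin r → ZMod 2 // a ∉ Submodule.span (ZMod 2) (Set.range f)} =
      Fintype.card ↥((Submodule.span (ZMod 2) (Set.range f) : Set W)ᶜ) := by
    rw [Nat.card_eq_fintype_card]
    exact Fintype.card_congr (Equiv.refl _)
  rw [h1, Fintype.card_compl_set, card_V]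
  congr 1
  rw [Module.card_eq_pow_finrank (K := ZMod 2)
    (V := ((Submodule.span (ZMod 2) (Set.range f)) : Set W)), ZMod.card]
  congr 1
  simp only [SetLike.coe_sort_coe, finrank_span_eq_card hf]

open Classical in
lemma card_li_cons (v₀ : Fin r → ZMod 2) (hv₀ : v₀ ≠ 0) :
    ∀ m : ℕ, m < r →
    Nat.card {w : Fin m → Fin r → ZMod 2 //
        LinearIndependent (ZMod 2) (Fin.cons v₀ w : Fin (m+1) → Fin r → ZMod 2)} =
      ∏ i : Fin m, (2 ^ r - 2 ^ (i.val + 1)) := by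
  intro m
  induction m with
  | zero =>
      intro _
      have hall : ∀ w : Fin 0 → W, LinearIndependent (ZMod 2)
          (Fin.cons v₀ w : Fin 1 → W) := by
        intro w
        rw [linearIndependent_fin_cons]
        refine ⟨linearIndependent_empty_type, ?_⟩
        simp only [Set.range_eq_empty, Submodule.span_empty, Submodule.mem_bot]
        exact hv₀
      rw [Nat.card_congr (Equiv.subtypeUnivEquiv hall)]
      simp [Nat.card_eq_fintype_card]
  | succ m ih =>
      intro hm
      have hmr : m < r := Nat.lt_of_succ_lt hm
      -- equivalence with sigma type
      have E : {w : Fin (m+1) → W //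
            LinearIndependent (ZMod 2) (Fin.cons v₀ w : Fin (m+2) → W)} ≃
          Σ w : {w : Fin m → W //
            LinearIndependent (ZMod 2) (Fin.cons v₀ w : Fin (m+1) → W)},
            {a : W // a ∉ Submodule.span (ZMod 2)
              (Set.range (Fin.cons v₀ (w : Fin m → W) : Fin (m+1) → W))} := by
        refine
        { toFun := fun w => ?_
          invFun := fun p => ⟨Fin.snoc p.1.1 p.2.1, ?_⟩
          left_inv := ?_
          right_inv := ?_ }
        · have h1 : (Fin.cons v₀ w.1 : Fin (m+2) → W) =
              Fin.snoc (Fin.cons v₀ (Fin.init w.1)) (w.1 (Fin.last m)) := by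
            rw [← Fin.cons_snoc_eq_snoc_cons, Fin.snoc_init_self]
          have h2 := w.2
          rw [h1, linearIndependent_fin_snoc] at h2
          exact ⟨⟨Fin.init w.1, h2.1⟩, ⟨w.1 (Fin.last m), h2.2⟩⟩
        · rw [Fin.cons_snoc_eq_snoc_cons, linearIndependent_fin_snoc]
          exact ⟨p.1.2, p.2.2⟩
        · intro w
          apply Subtype.ext
          simp [Fin.snoc_init_self]
        · rintro ⟨⟨w, hw⟩, ⟨a, ha⟩⟩
          refine Sigma.ext ?_ ?_
          · apply Subtype.ext
            simp [Fin.init_snoc]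
          · simp only
            rw [Subtype.heq_iff_coe_eq]
            · simp [Fin.snoc_last]
            · intro b
              simp [Fin.init_snoc]
      rw [Nat.card_congr E]
      rw [Nat.card_eq_fintype_card, Fintype.card_sigma]
      have hfib : ∀ w : {w : Fin m → W //
            LinearIndependent (ZMod 2) (Fin.cons v₀ w : Fin (m+1) → W)},
          Fintype.card {a : W // a ∉ Submodule.span (ZMod 2)
              (Set.range (Fin.cons v₀ (w : Fin m → W) : Fin (m+1) → W))} =
            2 ^ r - 2 ^ (m + 1) := by
        intro w
        rw [← Nat.card_eq_fintype_card, card_compl_span w.2, Fintype.card_fin]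
      rw [Finset.sum_congr rfl (fun w _ => hfib w), Finset.sum_const, Finset.card_univ,
        ← Nat.card_eq_fintype_card, ih hmr, smul_eq_mul, mul_comm,
        Fin.prod_univ_castSucc]
      simp [mul_comm]

open Classical in
lemma card_li_elim {ι : Type} [Fintype ι] (v₀ : Fin r → ZMod 2) (hv₀ : v₀ ≠ 0)
    (h : Fintype.card ι < r) :
    Nat.card {u : ι → Fin r → ZMod 2 //
        LinearIndependent (ZMod 2) (fun o : Option ι => o.elim v₀ u)} =
      ∏ i : Fin (Fintype.card ι), (2 ^ r - 2 ^ (i.val + 1)) := by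
  set m := Fintype.card ι with hm
  let e : ι ≃ Fin m := Fintype.equivFin ι
  let g : Option ι ≃ Fin (m + 1) := (Equiv.optionCongr e).trans (finSuccEquiv m).symm
  have key : ∀ u : ι → W, (fun o : Option ι => o.elim v₀ u) =
      (Fin.cons v₀ (u ∘ e.symm) : Fin (m+1) → W) ∘ g := by
    intro u
    funext o
    cases o with
    | none => simp [g]
    | some i => simp [g]
  have hiff : ∀ u : ι → W,
      LinearIndependent (ZMod 2) (fun o : Option ι => o.elim v₀ u) ↔
      LinearIndependent (ZMod 2) (Fin.cons v₀ (u ∘ e.symm) : Fin (m+1) → W) := by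
    intro u
    rw [key u]
    exact linearIndependent_equiv g
  have E : {u : ι → W // LinearIndependent (ZMod 2) (fun o : Option ι => o.elim v₀ u)} ≃
      {s : Fin m → W // LinearIndependent (ZMod 2) (Fin.cons v₀ s : Fin (m+1) → W)} :=
    Equiv.subtypeEquiv (Equiv.arrowCongr e (Equiv.refl _)) (fun u => (hiff u).trans Iff.rfl)
  rw [Nat.card_congr E, card_li_cons v₀ hv₀ m h]

open Classical in
lemma card_li_pair {n : ℕ} (x y : Finset (Fin n)) (hxy : x ⊂ y)
    (hx : x.card = r - 1) (hy : y.card = r)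
    (v₀ : Fin r → ZMod 2) (hv₀ : v₀ ≠ 0) :
    Nat.card {w : ↥y → Fin r → ZMod 2 //
        LinearIndependent (ZMod 2)
          (fun o : Option ↥x => o.elim v₀ (fun i => w ⟨i.1, hxy.subset i.2⟩)) ∧
        LinearIndependent (ZMod 2) w} =
      (∏ i : Fin (r-1), (2 ^ r - 2 ^ (i.val + 1))) * (2 ^ r - 2 ^ (r-1)) := by
  have hr : 1 ≤ r := by
    have := Finset.card_lt_card hxy
    omega
  have hcard : (y \ x).card = 1 := by
    rw [Finset.card_sdiff_of_subset hxy.subset, hx, hy]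
    omega
  obtain ⟨j, hj⟩ := Finset.card_eq_one.mp hcard
  have hjmem : j ∈ y \ x := hj ▸ Finset.mem_singleton_self j
  have hjy : j ∈ y := (Finset.mem_sdiff.mp hjmem).1
  have hjx : j ∉ x := (Finset.mem_sdiff.mp hjmem).2
  have huniq : ∀ i : Fin n, i ∈ y → i ∉ x → i = j := by
    intro i hiy hix
    have : i ∈ y \ x := Finset.mem_sdiff.mpr ⟨hiy, hix⟩
    rw [hj] at this
    exact Finset.mem_singleton.mp this
  let ey : Option ↥x ≃ ↥y :=
  { toFun := fun o => o.elim ⟨j, hjy⟩ (fun i => ⟨i.1, hxy.subset i.2⟩)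
    invFun := fun i => if h : i.1 ∈ x then some ⟨i.1, h⟩ else none
    left_inv := by
      rintro (_ | i)
      · simp [hjx]
      · simp
    right_inv := by
      intro i
      by_cases h : i.1 ∈ x
      · simp [h]
      · simp only [h, dif_neg, not_false_iff]
        exact Subtype.ext ((huniq i.1 i.2 h).symm ▸ rfl) }
  have hey_none : (ey none).1 = j := rfl
  let E : {w : ↥y → W //
      LinearIndependent (ZMod 2)
        (fun o : Option ↥x => o.elim v₀ (fun i => w ⟨i.1, hxy.subset i.2⟩)) ∧
      LinearIndependent (ZMod 2) w} ≃
      Σ u : {u : ↥x → W //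
          LinearIndependent (ZMod 2) (fun o : Option ↥x => o.elim v₀ u)},
        {a : W // a ∉ Submodule.span (ZMod 2) (Set.range (u : ↥x → W))} :=
  { toFun := fun w =>
      ⟨⟨fun i => w.1 ⟨i.1, hxy.subset i.2⟩, w.2.1⟩,
        ⟨w.1 ⟨j, hjy⟩, by
          have hwo : LinearIndependent (ZMod 2) (w.1 ∘ ey) :=
            (linearIndependent_equiv ey).mpr w.2.2
          exact (linearIndependent_option.mp hwo).2⟩⟩
    invFun := fun p =>
      ⟨fun i => if h : i.1 ∈ x then p.1.1 ⟨i.1, h⟩ else p.2.1, by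
        constructor
        · have : (fun o : Option ↥x => o.elim v₀
              (fun i : ↥x => if h : (⟨i.1, hxy.subset i.2⟩ : ↥y).1 ∈ x
                then p.1.1 ⟨(⟨i.1, hxy.subset i.2⟩ : ↥y).1, h⟩ else p.2.1)) =
              (fun o : Option ↥x => o.elim v₀ p.1.1) := by
            funext o
            cases o with
            | none => rfl
            | some i => simp [i.2]
          exact this ▸ p.1.2
        · have hwo : LinearIndependent (ZMod 2)
              ((fun i : ↥y => if h : i.1 ∈ x then p.1.1 ⟨i.1, h⟩ else p.2.1) ∘ ey) := by
            have heq : ((fun i : ↥y => if h : i.1 ∈ x then p.1.1 ⟨i.1, h⟩ else p.2.1) ∘ ey) =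
                (fun o : Option ↥x => o.elim p.2.1 p.1.1) := by
              funext o
              cases o with
              | none => simp [ey, hjx]
              | some i => simp [ey, i.2]
            rw [heq]
            refine linearIndependent_option.mpr ⟨?_, ?_⟩
            · exact p.1.2.comp some (Option.some_injective _)
            · exact p.2.2
          exact (linearIndependent_equiv ey).mp hwo⟩
    left_inv := by
      rintro ⟨w, hw⟩
      apply Subtype.ext
      funext i
      by_cases h : i.1 ∈ x
      · simp only [h, dif_pos]
      · simp only [h, dif_neg, not_false_iff]
        exact congrArg w (Subtype.ext (huniq i.1 i.2 h)).symm
    right_inv := by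
      rintro ⟨⟨u, hu⟩, ⟨a, ha⟩⟩
      refine Sigma.ext ?_ ?_
      · apply Subtype.ext
        funext i
        simp [i.2]
      · simp only
        rw [Subtype.heq_iff_coe_eq]
        · simp [hjx]
        · intro b
          have : (fun i : ↥x => if h : (⟨i.1, hxy.subset i.2⟩ : ↥y).1 ∈ x
              then u ⟨(⟨i.1, hxy.subset i.2⟩ : ↥y).1, h⟩ else a) = u := by
            funext i
            simp [i.2]
          rw [this] }
  rw [Nat.card_congr E, Nat.card_eq_fintype_card, Fintype.card_sigma]
  have hfib : ∀ u : {u : ↥x → W //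
      LinearIndependent (ZMod 2) (fun o : Option ↥x => o.elim v₀ u)},
      Fintype.card {a : W // a ∉ Submodule.span (ZMod 2) (Set.range (u : ↥x → W))} =
        2 ^ r - 2 ^ (r - 1) := by
    intro u
    have hLIu : LinearIndependent (ZMod 2) (u : ↥x → W) :=
      u.2.comp some (Option.some_injective _)
    rw [← Nat.card_eq_fintype_card, card_compl_span hLIu, Fintype.card_coe, hx]
  rw [Finset.sum_congr rfl (fun u _ => hfib u), Finset.sum_const, Finset.card_univ,
    ← Nat.card_eq_fintype_card, smul_eq_mul]
  congr 1
  have hcx : Fintype.card ↥x = r - 1 := by rw [Fintype.card_coe, hx]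
  have := card_li_elim (ι := ↥x) v₀ hv₀ (by omega)
  rw [this, hcx]

open Classical in
lemma card_S {n : ℕ} (x y : Finset (Fin n)) (hxy : x ⊂ y)
    (hx : x.card = r - 1) (hy : y.card = r)
    (v₀ : Fin r → ZMod 2) (hv₀ : v₀ ≠ 0) :
    Nat.card {v : Fin n → {w : Fin r → ZMod 2 // w ≠ 0} //
        (LinearIndependent (ZMod 2)
            (fun m : Option ↥x => m.elim v₀ (fun j => (v j : Fin r → ZMod 2))) ∧
          Submodule.span (ZMod 2)
            (Set.range fun m : Option ↥x =>
              m.elim v₀ (fun j => (v j : Fin r → ZMod 2))) = ⊤) ∧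
        (LinearIndependent (ZMod 2) (fun m : ↥y => (v m : Fin r → ZMod 2)) ∧
          Submodule.span (ZMod 2)
            (Set.range fun m : ↥y => (v m : Fin r → ZMod 2)) = ⊤)} =
      ((∏ i : Fin (r-1), (2 ^ r - 2 ^ (i.val + 1))) * (2 ^ r - 2 ^ (r-1))) *
        (2 ^ r - 1) ^ (n - r) := by
  have hr : 1 ≤ r := by
    have := Finset.card_lt_card hxy
    omega
  have hfinrank : Module.finrank (ZMod 2) W = r := by
    rw [Module.finrank_fintype_fun_eq_card, Fintype.card_fin]
  haveI hny : Nonempty ↥y :=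
    Finset.nonempty_coe_sort.mpr (Finset.card_pos.mp (by omega))
  let E : {v : Fin n → {w : Fin r → ZMod 2 // w ≠ 0} //
        (LinearIndependent (ZMod 2)
            (fun m : Option ↥x => m.elim v₀ (fun j => (v j : Fin r → ZMod 2))) ∧
          Submodule.span (ZMod 2)
            (Set.range fun m : Option ↥x =>
              m.elim v₀ (fun j => (v j : Fin r → ZMod 2))) = ⊤) ∧
        (LinearIndependent (ZMod 2) (fun m : ↥y => (v m : Fin r → ZMod 2)) ∧
          Submodule.span (ZMod 2)
            (Set.range fun m : ↥y => (v m : Fin r → ZMod 2)) = ⊤)} ≃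
      ({w : ↥y → W //
        LinearIndependent (ZMod 2)
          (fun o : Option ↥x => o.elim v₀ (fun i => w ⟨i.1, hxy.subset i.2⟩)) ∧
        LinearIndependent (ZMod 2) w} ×
       ({i : Fin n // i ∉ y} → {w : Fin r → ZMod 2 // w ≠ 0})) :=
  { toFun := fun v =>
      ⟨⟨fun i : ↥y => (v.1 i.1 : W), v.2.1.1, v.2.2.1⟩, fun i => v.1 i.1⟩
    invFun := fun p =>
      ⟨fun i => if h : i ∈ y then ⟨p.1.1 ⟨i, h⟩, p.1.2.2.ne_zero ⟨i, h⟩⟩ else p.2 ⟨i, h⟩, by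
        have e1 : (fun m : Option ↥x => m.elim v₀ (fun j : ↥x =>
            ((if h : j.1 ∈ y then ⟨p.1.1 ⟨j.1, h⟩, p.1.2.2.ne_zero ⟨j.1, h⟩⟩
              else p.2 ⟨j.1, h⟩ : {w : Fin r → ZMod 2 // w ≠ 0}) : W))) =
            (fun o : Option ↥x => o.elim v₀ (fun i => p.1.1 ⟨i.1, hxy.subset i.2⟩)) := by
          funext o
          cases o with
          | none => rfl
          | some i => simp [hxy.subset i.2]
        have e2 : (fun m : ↥y =>
            ((if h : m.1 ∈ y then ⟨p.1.1 ⟨m.1, h⟩, p.1.2.2.ne_zero ⟨m.1, h⟩⟩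
              else p.2 ⟨m.1, h⟩ : {w : Fin r → ZMod 2 // w ≠ 0}) : W)) = p.1.1 := by
          funext i
          simp [i.2]
        have c1 : LinearIndependent (ZMod 2) (fun m : Option ↥x => m.elim v₀ (fun j : ↥x =>
            ((if h : j.1 ∈ y then ⟨p.1.1 ⟨j.1, h⟩, p.1.2.2.ne_zero ⟨j.1, h⟩⟩
              else p.2 ⟨j.1, h⟩ : {w : Fin r → ZMod 2 // w ≠ 0}) : W))) := by
          rw [e1]; exact p.1.2.1
        have c3 : LinearIndependent (ZMod 2) (fun m : ↥y =>
            ((if h : m.1 ∈ y then ⟨p.1.1 ⟨m.1, h⟩, p.1.2.2.ne_zero ⟨m.1, h⟩⟩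
              else p.2 ⟨m.1, h⟩ : {w : Fin r → ZMod 2 // w ≠ 0}) : W)) := by
          rw [e2]; exact p.1.2.2
        refine ⟨⟨c1, ?_⟩, ⟨c3, ?_⟩⟩
        · exact c1.span_eq_top_of_card_eq_finrank
            (by rw [Fintype.card_option, Fintype.card_coe, hx, hfinrank]; omega)
        · exact c3.span_eq_top_of_card_eq_finrank
            (by rw [Fintype.card_coe, hy, hfinrank])⟩
    left_inv := by
      rintro ⟨v, hv⟩
      apply Subtype.ext
      funext i
      by_cases h : i ∈ y
      · simp only [h, dif_pos]
      · simp only [h, dif_neg, not_false_iff]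
    right_inv := by
      rintro ⟨⟨w, hw⟩, z⟩
      refine Prod.ext ?_ ?_
      · apply Subtype.ext
        funext i
        simp [i.2]
      · funext i
        simp [i.2] }
  rw [Nat.card_congr E, Nat.card_prod, card_li_pair x y hxy hx hy v₀ hv₀]
  congr 1
  rw [Nat.card_fun]
  have h1 : Nat.card {w : Fin r → ZMod 2 // w ≠ 0} = 2 ^ r - 1 := by
    rw [Nat.card_eq_fintype_card, Fintype.card_subtype_compl, card_V,
      Fintype.card_subtype_eq (0 : Fin r → ZMod 2)]
  have h2 : Nat.card {i : Fin n // i ∉ y} = n - r := by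
    rw [Nat.card_eq_fintype_card, Fintype.card_subtype_compl, Fintype.card_fin,
      Fintype.card_coe, hy]
  rw [h1, h2]

lemma fpos : ∀ k : ℕ, (0:ℝ) < 1 - (2:ℝ)⁻¹ ^ (k+1) := by
  intro k
  have h1 : (2:ℝ)⁻¹ ^ (k+1) ≤ (2:ℝ)⁻¹ ^ 1 :=
    pow_le_pow_of_le_one (by norm_num) (by norm_num) (by omega)
  simp only [pow_one] at h1
  linarith

lemma fle1 : ∀ k : ℕ, (1:ℝ) - (2:ℝ)⁻¹ ^ (k+1) ≤ 1 := by
  intro k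
  have : (0:ℝ) < (2:ℝ)⁻¹ ^ (k+1) := by positivity
  linarith

lemma hmult_shift (m : ℕ) :
    Multipliable (fun k : ℕ => (1:ℝ) - (2:ℝ)⁻¹ ^ (k + m + 1)) := by
  have hsum : Summable (fun k : ℕ => Real.log (1 - (2:ℝ)⁻¹ ^ (k+1))) := by
    apply Summable.of_norm_bounded (g := fun k => (3/2) * (2:ℝ)⁻¹ ^ (k+1))
    · have hg : Summable (fun k : ℕ => (2:ℝ)⁻¹ ^ k) :=
        summable_geometric_of_lt_one (by norm_num) (by norm_num)
      exact (hg.mul_left (3/2 * 2⁻¹)).congr (fun k => by rw [pow_succ]; ring)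
    · intro k
      have ht0 : (0:ℝ) < (2:ℝ)⁻¹ ^ (k+1) := by positivity
      have ht2 : (2:ℝ)⁻¹ ^ (k+1) ≤ 1/2 := by
        have h1 : (2:ℝ)⁻¹ ^ (k+1) ≤ (2:ℝ)⁻¹ ^ 1 :=
          pow_le_pow_of_le_one (by norm_num) (by norm_num) (by omega)
        rw [pow_one] at h1
        linarith
      set t : ℝ := (2:ℝ)⁻¹ ^ (k+1) with ht
      have h0 : (0:ℝ) < 1 - t := by linarith
      have hnt : ‖((-t : ℝ) : ℂ)‖ = t := by
        rw [Complex.norm_real, Real.norm_eq_abs, abs_neg, abs_of_pos ht0]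
      have hbound := Complex.norm_log_one_add_half_le_self (z := ((-t : ℝ) : ℂ))
        (by rw [hnt]; linarith)
      rw [hnt] at hbound
      have he : (1 : ℂ) + ((-t : ℝ) : ℂ) = ((1 - t : ℝ) : ℂ) := by push_cast; ring
      rw [he, ← Complex.ofReal_log h0.le, Complex.norm_real] at hbound
      exact hbound
  have hsum2 : Summable (fun k : ℕ => Real.log (1 - (2:ℝ)⁻¹ ^ (k + m + 1))) := by
    have := (summable_nat_add_iff (f := fun k : ℕ => Real.log (1 - (2:ℝ)⁻¹ ^ (k+1))) m).2 hsum
    exact this.congr (fun k => by ring_nf)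
  exact Real.multipliable_of_summable_log (fun k => fpos (k + m)) hsum2

lemma tprod_le_partial (m : ℕ) :
    (∏' k : ℕ, ((1:ℝ) - (2:ℝ)⁻¹ ^ (k+1))) ≤
      ∏ k ∈ Finset.range m, ((1:ℝ) - (2:ℝ)⁻¹ ^ (k+1)) := by
  rw [← Multipliable.prod_mul_tprod_nat_mul' (f := fun k : ℕ => (1:ℝ) - (2:ℝ)⁻¹ ^ (k+1)) (k := m) (hmult_shift m)]
  have htail : (∏' k : ℕ, ((1:ℝ) - (2:ℝ)⁻¹ ^ (k + m + 1))) ≤ 1 := by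
    apply Multipliable.tprod_le_of_prod_range_le (hmult_shift m)
    intro s
    apply Finset.prod_le_one
    · intro i _
      exact (fpos (i + m)).le
    · intro i _
      exact fle1 (i + m)
  have hpartial : (0:ℝ) ≤ ∏ k ∈ Finset.range m, ((1:ℝ) - (2:ℝ)⁻¹ ^ (k+1)) :=
    Finset.prod_nonneg (fun k _ => (fpos k).le)
  calc (∏ k ∈ Finset.range m, ((1:ℝ) - (2:ℝ)⁻¹ ^ (k+1))) *
        (∏' k : ℕ, ((1:ℝ) - (2:ℝ)⁻¹ ^ (k + m + 1))) ≤
      (∏ k ∈ Finset.range m, ((1:ℝ) - (2:ℝ)⁻¹ ^ (k+1))) * 1 := by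
        exact mul_le_mul_of_nonneg_left htail hpartial
    _ = _ := mul_one _



open Classical in
/-- Let x ⊂ y ⊆ [n] with |x| = r-1, |y| = r. If v₁,…,v_n are i.i.d. uniform on
𝔽₂^r \ {0} and v₀ is a fixed nonzero vector, the probability that both
{v₀} ∪ {v_i : i ∈ x} and {v_i : i ∈ y} are bases of 𝔽₂^r is greater than
(1/2)·∏_{k=1}^∞ (1 - 2^{-k}). -/
theorem stmt16 (n r : ℕ) (x y : Finset (Fin n)) (hxy : x ⊂ y)
    (hx : x.card = r - 1) (hy : y.card = r)
    (v₀ : Fin r → ZMod 2) (hv₀ : v₀ ≠ 0) :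
    (Nat.card {v : Fin n → {w : Fin r → ZMod 2 // w ≠ 0} //
        (LinearIndependent (ZMod 2)
            (fun m : Option ↥x => m.elim v₀ (fun j => (v j : Fin r → ZMod 2))) ∧
          Submodule.span (ZMod 2)
            (Set.range fun m : Option ↥x =>
              m.elim v₀ (fun j => (v j : Fin r → ZMod 2))) = ⊤) ∧
        (LinearIndependent (ZMod 2) (fun m : ↥y => (v m : Fin r → ZMod 2)) ∧
          Submodule.span (ZMod 2)
            (Set.range fun m : ↥y => (v m : Fin r → ZMod 2)) = ⊤)} : ℝ) /
      ((2 ^ r - 1 : ℝ) ^ n) >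
    (1 / 2) * ∏' k : ℕ, (1 - (2 : ℝ)⁻¹ ^ (k + 1)) := by
  have hr : 1 ≤ r := by
    have := Finset.card_lt_card hxy
    omega
  have hrn : r ≤ n := by
    have := Finset.card_le_univ y
    rw [hy] at this
    simpa using this
  rw [card_S x y hxy hx hy v₀ hv₀]
  have hBnat : (2:ℕ) ^ r - 2 ^ (r-1) = 2 ^ (r-1) := by
    have h2 : (2:ℕ) ^ r = 2 ^ (r-1) * 2 := by
      rw [← pow_succ]
      congr 1
      omega
    omega
  rw [hBnat]
  have hq : (0:ℝ) < 2 ^ r - 1 := by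
    have h2 : (2:ℝ) = 2 ^ 1 := (pow_one 2).symm
    have : (2:ℝ) ^ 1 ≤ 2 ^ r := pow_le_pow_right₀ (by norm_num) hr
    rw [pow_one] at this
    linarith
  set q : ℝ := 2 ^ r - 1 with hqdef
  set A : ℝ := ∏ i : Fin (r-1), ((2:ℝ) ^ r - 2 ^ (i.val + 1)) with hAdef
  set Bb : ℝ := (2:ℝ) ^ (r-1) with hBdef
  set T : ℝ := ∏' k : ℕ, (1 - (2:ℝ)⁻¹ ^ (k + 1)) with hTdef
  set Q : ℝ := ∏ k ∈ Finset.range (r-1), ((1:ℝ) - (2:ℝ)⁻¹ ^ (k+1)) with hQdef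
  have hcast : (((((∏ i : Fin (r-1), (2 ^ r - 2 ^ (i.val + 1))) * 2 ^ (r-1)) *
      (2 ^ r - 1) ^ (n - r)) : ℕ) : ℝ) = A * Bb * q ^ (n-r) := by
    rw [Nat.cast_mul, Nat.cast_mul, Nat.cast_prod, Nat.cast_pow, Nat.cast_pow]
    rw [Nat.cast_sub Nat.one_le_two_pow]
    have hfac : ∀ i : Fin (r-1),
        (((2:ℕ) ^ r - 2 ^ (i.val + 1) : ℕ) : ℝ) = (2:ℝ) ^ r - 2 ^ (i.val + 1) := by
      intro i
      have hi := i.isLt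
      rw [Nat.cast_sub (Nat.pow_le_pow_right (by norm_num) (by omega))]
      push_cast
      ring
    rw [Finset.prod_congr rfl (fun i _ => hfac i)]
    push_cast
    ring
  rw [hcast]
  have hqne : q ^ (n - r) ≠ 0 := pow_ne_zero _ (ne_of_gt hq)
  have key : A * Bb * q ^ (n-r) / q ^ n = A * Bb / q ^ r := by
    rw [show q ^ n = q ^ r * q ^ (n-r) from by rw [← pow_add]; congr 1; omega]
    rw [mul_comm (q ^ r) (q ^ (n-r)), ← div_div, mul_div_assoc, div_self hqne, mul_one]
  rw [key]
  -- positivity facts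
  have hQpos : (0:ℝ) < Q := Finset.prod_pos (fun k _ => fpos k)
  have hBpos : (0:ℝ) < Bb := by positivity
  have hA : q ^ (r-1) * Q ≤ A := by
    have hQ' : Q = ∏ i ∈ Finset.range (r-1), ((1:ℝ) - (2:ℝ)⁻¹ ^ (r-1-i)) := by
      rw [hQdef, ← Finset.prod_range_reflect (fun j => (1:ℝ) - (2:ℝ)⁻¹ ^ (j+1)) (r-1)]
      apply Finset.prod_congr rfl
      intro i hi
      rw [Finset.mem_range] at hi
      congr 2
      omega
    have hqQ : q ^ (r-1) * Q =
        ∏ i ∈ Finset.range (r-1), (q * ((1:ℝ) - (2:ℝ)⁻¹ ^ (r-1-i))) := by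
      rw [Finset.prod_mul_distrib, Finset.prod_const, Finset.card_range, ← hQ']
    have hAr : A = ∏ i ∈ Finset.range (r-1), ((2:ℝ) ^ r - 2 ^ (i + 1)) :=
      Fin.prod_univ_eq_prod_range (fun j => (2:ℝ) ^ r - 2 ^ (j + 1)) (r-1)
    rw [hqQ, hAr]
    apply Finset.prod_le_prod
    · intro i _
      have ht1 : (2:ℝ)⁻¹ ^ (r-1-i) ≤ 1 := pow_le_one₀ (by norm_num) (by norm_num)
      have ht0 : (0:ℝ) ≤ (2:ℝ)⁻¹ ^ (r-1-i) := by positivity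
      nlinarith [hq.le]
    · intro i hi
      rw [Finset.mem_range] at hi
      have e3 : (2:ℝ)⁻¹ ^ (r-1-i) * 2 ^ r = 2 ^ (i+1) := by
        have e1 : (2:ℝ) ^ (r-1-i) * 2 ^ (i+1) = 2 ^ r := by
          rw [← pow_add]; congr 1; omega
        have e2 : (2:ℝ)⁻¹ ^ (r-1-i) * 2 ^ (r-1-i) = 1 := by
          rw [← mul_pow]; norm_num
        calc (2:ℝ)⁻¹ ^ (r-1-i) * 2 ^ r
            = (2:ℝ)⁻¹ ^ (r-1-i) * ((2:ℝ) ^ (r-1-i) * 2 ^ (i+1)) := by rw [e1]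
          _ = ((2:ℝ)⁻¹ ^ (r-1-i) * (2:ℝ) ^ (r-1-i)) * 2 ^ (i+1) := by ring
          _ = 2 ^ (i+1) := by rw [e2, one_mul]
      have ht1 : (2:ℝ)⁻¹ ^ (r-1-i) ≤ 1 := pow_le_one₀ (by norm_num) (by norm_num)
      have ht0 : (0:ℝ) ≤ (2:ℝ)⁻¹ ^ (r-1-i) := by positivity
      rw [hqdef]
      nlinarith [e3]
  have hBq : (1:ℝ)/2 < Bb / q := by
    rw [lt_div_iff₀ hq]
    have e : (2:ℝ) ^ r = Bb * 2 := by rw [hBdef, ← pow_succ]; congr 1; omega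
    rw [hqdef]
    linarith
  have s2 : Bb / q * Q = q ^ (r-1) * Q * Bb / q ^ r := by
    rw [show q ^ r = q ^ (r-1) * q from by rw [← pow_succ]; congr 1; omega]
    field_simp
  have s3 : q ^ (r-1) * Q * Bb / q ^ r ≤ A * Bb / q ^ r := by
    gcongr
  calc (1:ℝ)/2 * T ≤ 1/2 * Q :=
        mul_le_mul_of_nonneg_left (tprod_le_partial (r-1)) (by norm_num)
    _ < Bb / q * Q := mul_lt_mul_of_pos_right hBq hQpos
    _ = q ^ (r-1) * Q * Bb / q ^ r := s2
    _ ≤ A * Bb / q ^ r := s3
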